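/- Let k ≥ 3, let x₁, …, x_{k−1} be pairwise distinct nodes of V and X = {x₁, …, x_{k−1}}. If there exist y_s, y_f ∈ V \ X such that the probe (x₁, y_s, x₂, …, x_{k−1}) succeeds and the probe (x₁, y_f, x₂, …, x_{k−1}) fails, then X ∩ C = ∅, and moreover for every y ∈ V \ X we have y ∈ C if and only if the probe (x₁, y, x₂, …, x_{k−1}) fails. -/
import Mathlib


variable {V : Type*}

/-- Under the naive DoS attacker, a probe (an injective `k`-tuple of nodes)
succeeds iff no node of the tuple is compromised, or both the first and last
nodes are compromised. -/
def probeSucceeds {k : ℕ} (hk : 0 < k) (C : Set V) (p : Fin k → V) : Prop :=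
  (∀ i, p i ∉ C) ∨ (p ⟨0, hk⟩ ∈ C ∧ p ⟨k - 1, by omega⟩ ∈ C)

/-- The probe `(x₁, y, x₂, …, x_{k-1})`: the node `y` is inserted in the second
position of the tuple `x₁, …, x_{k-1}`. -/
def probe1 {k : ℕ} (hk : 3 ≤ k) (x : Fin (k - 1) → V) (y : V) : Fin k → V :=
  fun i =>
    if (i : ℕ) = 0 then x ⟨0, by omega⟩
    else if (i : ℕ) = 1 then y
    else x ⟨(i : ℕ) - 1, by have := i.isLt; omega⟩

/-- If among the probes `(x₁, y, x₂, …, x_{k-1})` with `y ∉ X` at least one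
succeeds and at least one fails, then no node of `X` is compromised, and a
node `y ∉ X` is compromised iff its probe fails. -/
theorem stmt1 [Fintype V] {k : ℕ} (hk : 3 ≤ k) (C : Set V)
    (x : Fin (k - 1) → V) (hx : Function.Injective x)
    (hs : ∃ ys, ys ∉ Set.range x ∧ probeSucceeds (by omega) C (probe1 hk x ys))
    (hf : ∃ yf, yf ∉ Set.range x ∧ ¬ probeSucceeds (by omega) C (probe1 hk x yf)) :
    Set.range x ∩ C = ∅ ∧
      ∀ y, y ∉ Set.range x → (y ∈ C ↔ ¬ probeSucceeds (by omega) C (probe1 hk x y)) := by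
  obtain ⟨ys, hys, hsucc⟩ := hs
  obtain ⟨yf, hyf, hfail⟩ := hf
  -- every x j appears in every probe
  have hmem : ∀ (y : V) (j : Fin (k - 1)), ∃ i : Fin k, probe1 hk x y i = x j := by
    intro y j
    by_cases hj : (j : ℕ) = 0
    · refine ⟨⟨0, by omega⟩, ?_⟩
      simp [probe1]
      congr 1
      exact Fin.ext hj.symm
    · refine ⟨⟨(j : ℕ) + 1, by have := j.isLt; omega⟩, ?_⟩
      have : ((j : ℕ) + 1) ≠ 0 := by omega
      have h1 : ((j : ℕ) + 1) ≠ 1 := by omega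
      simp only [probe1, this, h1, if_false]
      congr 1
  -- last node of any probe is x ⟨k-2⟩
  have hlast : ∀ y : V, probe1 hk x y ⟨k - 1, by omega⟩ = x ⟨k - 2, by omega⟩ := by
    intro y
    have h0 : (k - 1) ≠ 0 := by omega
    have h1 : (k - 1) ≠ 1 := by omega
    simp only [probe1, h0, h1, if_false]
    congr 1
  have hfirst : ∀ y : V, probe1 hk x y ⟨0, by omega⟩ = x ⟨0, by omega⟩ := by
    intro y; simp [probe1]
  -- the right disjunct is false
  have hright : ¬ (x ⟨0, by omega⟩ ∈ C ∧ x ⟨k - 2, by omega⟩ ∈ C) := by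
    rintro ⟨h1, h2⟩
    exact hfail (Or.inr ⟨by rw [hfirst]; exact h1, by rw [hlast]; exact h2⟩)
  -- hence hsucc is the left disjunct
  have hall : ∀ i, probe1 hk x ys i ∉ C := by
    rcases hsucc with h | h
    · exact h
    · exact absurd ⟨by rw [← hfirst ys]; exact h.1, by rw [← hlast ys]; exact h.2⟩ hright
  have hxC : ∀ j : Fin (k - 1), x j ∉ C := by
    intro j
    obtain ⟨i, hi⟩ := hmem ys j
    rw [← hi]; exact hall i
  constructor
  · ext v
    simp only [Set.mem_inter_iff, Set.mem_range, Set.mem_empty_iff_false, iff_false]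
    rintro ⟨⟨j, rfl⟩, hvC⟩
    exact hxC j hvC
  · intro y hy
    constructor
    · intro hyC hsucc'
      rcases hsucc' with h | h
      · have := h ⟨1, by omega⟩
        simp [probe1] at this
        exact this hyC
      · exact hright ⟨by rw [← hfirst y]; exact h.1, by rw [← hlast y]; exact h.2⟩
    · intro hfail'
      by_contra hyC
      apply hfail'
      left
      intro i
      by_cases h0 : (i : ℕ) = 0
      · simp only [probe1, h0, if_true]; exact hxC _
      by_cases h1 : (i : ℕ) = 1
      · simp only [probe1, h0, h1, if_true, if_false]; exact hyC
      · simp only [probe1, h0, h1, if_false]; exact hxC _
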